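/- The subgroup H = ⟨a⟩_∞ * ⟨b⟩_∞ (free of rank 2) of Ĝ = ⟨a, b, c | [a, cbc⁻¹]⟩ is not verbally closed: there is a word w₂(x₁,x₂,x₃) (a Lee C-test word for F₂) such that the equation w₂(x₁, x₂, [x₁, x₃x₂x₃⁻¹]) = w₂(a, b, 1) has a solution in Ĝ (namely x₁ = a, x₂ = b, x₃ = c) but no solution in H. -/

import Mathlib

open Matrix Pointwise

open scoped commutatorElement

noncomputable section

abbrev Gm : Type := (Matrix (Fin 2) (Fin 2) ℝ)ˣ

def Au : Gm :=
  ⟨!![1,2;0,1], !![1,-2;0,1],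
    by ext i j; fin_cases i <;> fin_cases j <;> norm_num [Matrix.mul_apply, Fin.sum_univ_two, Matrix.one_apply],
    by ext i j; fin_cases i <;> fin_cases j <;> norm_num [Matrix.mul_apply, Fin.sum_univ_two, Matrix.one_apply]⟩

def Bu : Gm :=
  ⟨!![1,0;2,1], !![1,0;-2,1],
    by ext i j; fin_cases i <;> fin_cases j <;> norm_num [Matrix.mul_apply, Fin.sum_univ_two, Matrix.one_apply],
    by ext i j; fin_cases i <;> fin_cases j <;> norm_num [Matrix.mul_apply, Fin.sum_univ_two, Matrix.one_apply]⟩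

def Cu : Gm :=
  ⟨!![0,1;-1,0], !![0,-1;1,0],
    by ext i j; fin_cases i <;> fin_cases j <;> norm_num [Matrix.mul_apply, Fin.sum_univ_two, Matrix.one_apply],
    by ext i j; fin_cases i <;> fin_cases j <;> norm_num [Matrix.mul_apply, Fin.sum_univ_two, Matrix.one_apply]⟩

lemma Au_val : Au.val = !![1,2;0,1] := rfl
lemma Bu_val : Bu.val = !![1,0;2,1] := rfl
lemma Au_inv_val : (Au⁻¹).val = !![1,-2;0,1] := rfl
lemma Bu_inv_val : (Bu⁻¹).val = !![1,0;-2,1] := rfl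

def PV : Type := {v : Fin 2 → ℝ // v ≠ 0}

instance : SMul Gm PV :=
  ⟨fun g v => ⟨g.val *ᵥ v.val, fun h => v.prop (by
    have h2 : g⁻¹.val *ᵥ (g.val *ᵥ v.val) = g⁻¹.val *ᵥ 0 := by rw [h]
    rwa [Matrix.mulVec_mulVec, Units.inv_mul, Matrix.one_mulVec, Matrix.mulVec_zero] at h2)⟩⟩

lemma smul_coe (g : Gm) (v : PV) : (g • v).val = g.val *ᵥ v.val := rfl

instance : MulAction Gm PV where
  one_smul v := Subtype.ext (by rw [smul_coe, Units.val_one, Matrix.one_mulVec])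
  mul_smul g h v := Subtype.ext (by
    rw [smul_coe, smul_coe, smul_coe, Units.val_mul, Matrix.mulVec_mulVec])

lemma pv_cases (v : PV) : v.val 0 ≠ 0 ∨ v.val 1 ≠ 0 := by
  rcases Function.ne_iff.1 v.prop with ⟨i, hi⟩
  fin_cases i
  · exact Or.inl hi
  · exact Or.inr (by simpa using hi)

/-- the four ping-pong sets -/
def X0 : Set PV := {v | v.val 1 = 0 ∨ 1 ≤ v.val 0 / v.val 1}
def Y0 : Set PV := {v | v.val 1 ≠ 0 ∧ v.val 0 / v.val 1 < -1}
def X1 : Set PV := {v | v.val 0 = 0 ∨ 1 < v.val 1 / v.val 0}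
def Y1 : Set PV := {v | v.val 0 ≠ 0 ∧ v.val 1 / v.val 0 ≤ -1}

lemma tu_one (v : PV) (h0 : v.val 0 ≠ 0) (h1 : v.val 1 ≠ 0) :
    (v.val 0 / v.val 1) * (v.val 1 / v.val 0) = 1 := by field_simp

lemma X0_X1_disj : Disjoint X0 X1 := by
  rw [Set.disjoint_left]
  rintro v (h1 | ht) (h0 | hu)
  · exact absurd (funext fun i => by fin_cases i <;> assumption) v.prop
  · rw [h1] at hu; simp at hu; linarith
  · rw [h0] at ht; simp at ht; linarith
  · have h1 : v.val 1 ≠ 0 := fun h => by rw [h] at ht; simp at ht; linarith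
    have h0 : v.val 0 ≠ 0 := fun h => by rw [h] at hu; simp at hu; linarith
    nlinarith [tu_one v h0 h1]

lemma Y0_Y1_disj : Disjoint Y0 Y1 := by
  rw [Set.disjoint_left]
  rintro v ⟨h1, ht⟩ ⟨h0, hu⟩
  nlinarith [tu_one v h0 h1]

lemma X0_Y0_disj : Disjoint X0 Y0 := by
  rw [Set.disjoint_left]
  rintro v (h1 | ht) ⟨h1', ht'⟩
  · exact h1' h1
  · linarith

lemma X0_Y1_disj : Disjoint X0 Y1 := by
  rw [Set.disjoint_left]
  rintro v (h1 | ht) ⟨h0, hu⟩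
  · rw [h1] at hu; simp at hu; linarith
  · have h1 : v.val 1 ≠ 0 := fun h => by rw [h] at hu; simp at hu; linarith
    have h0' : v.val 0 ≠ 0 := fun h => by rw [h] at ht; simp at ht; linarith
    nlinarith [tu_one v h0' h1]

lemma X1_Y0_disj : Disjoint X1 Y0 := by
  rw [Set.disjoint_left]
  rintro v (h0 | hu) ⟨h1, ht⟩
  · rw [h0] at ht; simp at ht; linarith
  · have h0 : v.val 0 ≠ 0 := fun h => by rw [h] at ht; simp at ht; linarith
    nlinarith [tu_one v h0 h1]

lemma X1_Y1_disj : Disjoint X1 Y1 := by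
  rw [Set.disjoint_left]
  rintro v (h0 | hu) ⟨h0', hu'⟩
  · exact h0' h0
  · linarith

lemma mulvec_A (w : Fin 2 → ℝ) : (!![1,2;0,1] : Matrix (Fin 2) (Fin 2) ℝ) *ᵥ w = ![w 0 + 2 * w 1, w 1] := by
  funext i; fin_cases i <;> simp [Matrix.mulVec, dotProduct, Fin.sum_univ_two] <;> ring

lemma mulvec_A' (w : Fin 2 → ℝ) : (!![1,-2;0,1] : Matrix (Fin 2) (Fin 2) ℝ) *ᵥ w = ![w 0 - 2 * w 1, w 1] := by
  funext i; fin_cases i <;> simp [Matrix.mulVec, dotProduct, Fin.sum_univ_two] <;> ring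

lemma mulvec_B (w : Fin 2 → ℝ) : (!![1,0;2,1] : Matrix (Fin 2) (Fin 2) ℝ) *ᵥ w = ![w 0, 2 * w 0 + w 1] := by
  funext i; fin_cases i <;> simp [Matrix.mulVec, dotProduct, Fin.sum_univ_two] <;> ring

lemma mulvec_B' (w : Fin 2 → ℝ) : (!![1,0;-2,1] : Matrix (Fin 2) (Fin 2) ℝ) *ᵥ w = ![w 0, -2 * w 0 + w 1] := by
  funext i; fin_cases i <;> simp [Matrix.mulVec, dotProduct, Fin.sum_univ_two] <;> ring

lemma div_add_two (x y : ℝ) (hy : y ≠ 0) : (x + 2 * y) / y = x / y + 2 := by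
  rw [add_div, mul_div_assoc, div_self hy, mul_one]

lemma div_sub_two (x y : ℝ) (hy : y ≠ 0) : (x - 2 * y) / y = x / y - 2 := by
  rw [sub_div, mul_div_assoc, div_self hy, mul_one]

lemma sanov_injective : Function.Injective (FreeGroup.lift ![Au, Bu]) := by
  apply FreeGroup.injective_lift_of_ping_pong ![Au, Bu] ![X0, X1] ![Y0, Y1]
  · intro i; fin_cases i
    · exact ⟨⟨![1,0], by intro h; have := congrFun h 0; simp at this⟩, Or.inl rfl⟩
    · exact ⟨⟨![0,1], by intro h; have := congrFun h 1; simp at this⟩, Or.inl rfl⟩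
  · intro i j hij
    fin_cases i <;> fin_cases j <;> simp_all
    · exact X0_X1_disj
    · exact X0_X1_disj.symm
  · intro i j hij
    fin_cases i <;> fin_cases j <;> simp_all
    · exact Y0_Y1_disj
    · exact Y0_Y1_disj.symm
  · intro i j
    fin_cases i <;> fin_cases j <;> simp
    · exact X0_Y0_disj
    · exact X0_Y1_disj
    · exact X1_Y0_disj
    · exact X1_Y1_disj
  · intro i
    fin_cases i
    · rintro _ ⟨v, hv, rfl⟩
      simp only [Matrix.cons_val_zero] at hv ⊢
      have hval : (Au • v).val = ![v.val 0 + 2 * v.val 1, v.val 1] := by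
        rw [smul_coe, Au_val, mulvec_A]
      show (Au • v).val 1 = 0 ∨ 1 ≤ (Au • v).val 0 / (Au • v).val 1
      rw [hval]
      simp only [Matrix.cons_val_zero, Matrix.cons_val_one, Matrix.head_cons]
      by_cases h1 : v.val 1 = 0
      · exact Or.inl h1
      · right
        rw [div_add_two _ _ h1]
        have : ¬ (v.val 1 ≠ 0 ∧ v.val 0 / v.val 1 < -1) := hv
        push_neg at this
        have := this h1
        linarith
    · rintro _ ⟨v, hv, rfl⟩
      simp only [Matrix.cons_val_one, Matrix.head_cons] at hv ⊢
      have hval : (Bu • v).val = ![v.val 0, 2 * v.val 0 + v.val 1] := by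
        rw [smul_coe, Bu_val, mulvec_B]
      show (Bu • v).val 0 = 0 ∨ 1 < (Bu • v).val 1 / (Bu • v).val 0
      rw [hval]
      simp only [Matrix.cons_val_zero, Matrix.cons_val_one, Matrix.head_cons]
      by_cases h0 : v.val 0 = 0
      · exact Or.inl h0
      · right
        have hrw : (2 * v.val 0 + v.val 1) / v.val 0 = v.val 1 / v.val 0 + 2 := by
          field_simp; ring
        rw [hrw]
        have : ¬ (v.val 0 ≠ 0 ∧ v.val 1 / v.val 0 ≤ -1) := hv
        push_neg at this
        have := this h0
        linarith
  · intro i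
    fin_cases i
    · rintro _ ⟨v, hv, rfl⟩
      simp only [Matrix.cons_val_zero, Pi.inv_apply] at hv ⊢
      have hnx : ¬ (v.val 1 = 0 ∨ 1 ≤ v.val 0 / v.val 1) := hv
      push_neg at hnx
      obtain ⟨h1, ht⟩ := hnx
      have hval : ((![Au, Bu]⁻¹ : Fin 2 → Gm) 0 • v).val = ![v.val 0 - 2 * v.val 1, v.val 1] := by
        rw [smul_coe]
        show (Au⁻¹).val *ᵥ v.val = _
        rw [Au_inv_val, mulvec_A']
      show ((![Au, Bu]⁻¹ : Fin 2 → Gm) 0 • v).val 1 ≠ 0 ∧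
        ((![Au, Bu]⁻¹ : Fin 2 → Gm) 0 • v).val 0 / ((![Au, Bu]⁻¹ : Fin 2 → Gm) 0 • v).val 1 < -1
      rw [hval]
      simp only [Matrix.cons_val_zero, Matrix.cons_val_one, Matrix.head_cons]
      refine ⟨h1, ?_⟩
      rw [div_sub_two _ _ h1]
      linarith
    · rintro _ ⟨v, hv, rfl⟩
      simp only [Matrix.cons_val_one, Matrix.head_cons, Pi.inv_apply] at hv ⊢
      have hnx : ¬ (v.val 0 = 0 ∨ 1 < v.val 1 / v.val 0) := hv
      push_neg at hnx
      obtain ⟨h0, hu⟩ := hnx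
      have hval : ((![Au, Bu]⁻¹ : Fin 2 → Gm) 1 • v).val = ![v.val 0, -2 * v.val 0 + v.val 1] := by
        rw [smul_coe]
        show (Bu⁻¹).val *ᵥ v.val = _
        rw [Bu_inv_val, mulvec_B']
      show ((![Au, Bu]⁻¹ : Fin 2 → Gm) 1 • v).val 0 ≠ 0 ∧
        ((![Au, Bu]⁻¹ : Fin 2 → Gm) 1 • v).val 1 / ((![Au, Bu]⁻¹ : Fin 2 → Gm) 1 • v).val 0 ≤ -1
      rw [hval]
      simp only [Matrix.cons_val_zero, Matrix.cons_val_one, Matrix.head_cons]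
      refine ⟨h0, ?_⟩
      have : (-2 * v.val 0 + v.val 1) / v.val 0 = v.val 1 / v.val 0 - 2 := by
        field_simp; ring
      rw [this]
      linarith
/-- integral with identity reduction mod 2 -/
def Pg (g : Gm) : Prop :=
  ∃ m : Matrix (Fin 2) (Fin 2) ℤ, g.val = m.map (Int.castRingHom ℝ) ∧
    m.map (Int.castRingHom (ZMod 2)) = 1

lemma Pg_mul {g h : Gm} (hg : Pg g) (hh : Pg h) : Pg (g * h) := by
  obtain ⟨m, hm1, hm2⟩ := hg
  obtain ⟨n, hn1, hn2⟩ := hh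
  exact ⟨m * n, by rw [Units.val_mul, hm1, hn1, Matrix.map_mul],
    by rw [Matrix.map_mul, hm2, hn2, one_mul]⟩

lemma Pg_gen (m : Matrix (Fin 2) (Fin 2) ℤ) (g : Gm) (h1 : g.val = m.map (Int.castRingHom ℝ))
    (h2 : m.map (Int.castRingHom (ZMod 2)) = 1) : Pg g := ⟨m, h1, h2⟩

lemma map_lit {R : Type*} [NonAssocSemiring R] (a b c d : ℤ) (f : ℤ →+* R) :
    (!![a,b;c,d]).map f = !![f a, f b; f c, f d] := by
  ext i j; fin_cases i <;> fin_cases j <;> simp [Matrix.map_apply]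

lemma Pg_lit (g : Gm) (a b c d : ℤ) (h1 : g.val = !![(a:ℝ), b; c, d])
    (ha : (a:ZMod 2) = 1) (hb : (b:ZMod 2) = 0) (hc : (c:ZMod 2) = 0) (hd : (d:ZMod 2) = 1) :
    Pg g := by
  refine ⟨!![a,b;c,d], ?_, ?_⟩
  · rw [map_lit]; rw [h1]; norm_num
  · rw [map_lit]
    simp only [Int.coe_castRingHom]
    rw [ha, hb, hc, hd, Matrix.one_fin_two]

lemma PgAu : Pg Au := Pg_lit _ 1 2 0 1 (by rw [Au_val]; norm_num) (by decide) (by decide) (by decide) (by decide)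
lemma PgBu : Pg Bu := Pg_lit _ 1 0 2 1 (by rw [Bu_val]; norm_num) (by decide) (by decide) (by decide) (by decide)
lemma PgAu' : Pg Au⁻¹ := Pg_lit _ 1 (-2) 0 1 (by rw [Au_inv_val]; norm_num) (by decide) (by decide) (by decide) (by decide)
lemma PgBu' : Pg Bu⁻¹ := Pg_lit _ 1 0 (-2) 1 (by rw [show (Bu⁻¹).val = !![1,0;-2,1] from rfl]; norm_num) (by decide) (by decide) (by decide) (by decide)

lemma Pg_one : Pg 1 :=
  Pg_gen 1 _ (by rw [Units.val_one, Matrix.map_one _ (by simp) (by simp)])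
    (Matrix.map_one _ (by simp) (by simp))

lemma sanov_parity (x : FreeGroup (Fin 2)) : Pg (FreeGroup.lift ![Au, Bu] x) := by
  induction x using FreeGroup.induction_on with
  | C1 => simpa using Pg_one
  | of i =>
      have : (pure i : FreeGroup (Fin 2)) = FreeGroup.of i := rfl
      rw [FreeGroup.lift_apply_of]
      fin_cases i
      · exact PgAu
      · exact PgBu
  | inv_of i _ =>
      have : (pure i : FreeGroup (Fin 2)) = FreeGroup.of i := rfl
      rw [map_inv, FreeGroup.lift_apply_of]
      fin_cases i
      · exact PgAu'
      · exact PgBu'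
  | mul x y hx hy => rw [_root_.map_mul]; exact Pg_mul hx hy

lemma Pg_entry_ne {g : Gm} (hg : Pg g) : g.val 1 1 ≠ 0 := by
  obtain ⟨m, hm1, hm2⟩ := hg
  have h11 : ((m 1 1 : ℤ) : ZMod 2) = 1 := by
    have := congrFun (congrFun hm2 1) 1
    simpa [Matrix.map_apply, Matrix.one_apply] using this
  have hm11 : m 1 1 ≠ 0 := by
    intro h; rw [h] at h11; simp at h11
  rw [hm1]
  simpa [Matrix.map_apply] using hm11

/-- Relations of the group `Ĝ = ⟨a, b, c ∣ [a, b^c]⟩`. -/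
def rels17 : Set (FreeGroup (Fin 3)) :=
  {⁅(FreeGroup.of 0 : FreeGroup (Fin 3)),
      FreeGroup.of 2 * FreeGroup.of 1 * (FreeGroup.of 2)⁻¹⁆}

/-- The group `Ĝ = ⟨a, b, c ∣ [a, b^c]⟩ ≅ (ℤ × ℤ) * ℤ`. -/
abbrev Ghat17 : Type := PresentedGroup rels17

def a17 : Ghat17 := PresentedGroup.of 0
def b17 : Ghat17 := PresentedGroup.of 1
def c17 : Ghat17 := PresentedGroup.of 2

/-- The subgroup `H = ⟨a⟩_∞ * ⟨b⟩_∞` of `Ĝ`. -/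
def Hhat17 : Subgroup Ghat17 := Subgroup.closure {a17, b17}

/-- The value of the word `w₂(x₁, x₂, [x₁, x₂^{x₃}])` in `Ĝ`. -/
def lhs17 (w₂ : FreeGroup (Fin 3)) (x₁ x₂ x₃ : Ghat17) : Ghat17 :=
  FreeGroup.lift
    (![x₁, x₂, x₁ * (x₃ * x₂ * x₃⁻¹) * x₁⁻¹ * (x₃ * x₂ * x₃⁻¹)⁻¹]) w₂

lemma CBC : Cu * Bu * Cu⁻¹ = Au⁻¹ := by
  ext i j
  show (Cu.val * Bu.val * (Cu⁻¹).val) i j = (Au⁻¹).val i j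
  rw [show Cu.val = !![0,1;-1,0] from rfl, show Bu.val = !![1,0;2,1] from rfl,
    show (Cu⁻¹).val = !![0,-1;1,0] from rfl, Au_inv_val]
  fin_cases i <;> fin_cases j <;> norm_num [Matrix.mul_apply, Fin.sum_univ_two]

lemma hrels17 : ∀ r ∈ rels17, FreeGroup.lift ![Au, Bu, Cu] r = 1 := by
  intro r hr
  simp only [rels17, Set.mem_singleton_iff] at hr
  subst hr
  simp only [commutatorElement_def, _root_.map_mul, _root_.map_inv, FreeGroup.lift_apply_of,
    Matrix.cons_val_zero, Matrix.cons_val_one, Matrix.head_cons, Matrix.cons_val_two,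
    Matrix.tail_cons]
  rw [CBC]
  group

noncomputable def psi17 : Ghat17 →* Gm := PresentedGroup.toGroup hrels17

noncomputable def phi17 : FreeGroup (Fin 2) →* Ghat17 := FreeGroup.lift ![a17, b17]

lemma psi_phi (x : FreeGroup (Fin 2)) : psi17 (phi17 x) = FreeGroup.lift ![Au, Bu] x := by
  have h : psi17.comp phi17 = FreeGroup.lift ![Au, Bu] := by
    apply FreeGroup.ext_hom
    intro i
    fin_cases i <;>
      simp [phi17, psi17, a17, b17, PresentedGroup.toGroup.of]
  exact DFunLike.congr_fun h x

lemma phi_inj : Function.Injective phi17 := by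
  intro x y h
  apply sanov_injective
  rw [← psi_phi, ← psi_phi, h]

lemma range_phi : phi17.range = Hhat17 := by
  show (FreeGroup.lift ![a17, b17]).range = Hhat17
  rw [FreeGroup.range_lift_eq_closure]
  have h : Set.range ![a17, b17] = {a17, b17} := by
    ext z
    simp [Set.mem_range, Fin.exists_fin_two, eq_comm, or_comm]
  rw [h]
  rfl

lemma relid : a17 * (c17 * b17 * c17⁻¹) * a17⁻¹ * (c17 * b17 * c17⁻¹)⁻¹ = 1 := by
  have h : PresentedGroup.mk rels17
      ⁅(FreeGroup.of 0 : FreeGroup (Fin 3)),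
        FreeGroup.of 2 * FreeGroup.of 1 * (FreeGroup.of 2)⁻¹⁆ = 1 := by
    apply (QuotientGroup.eq_one_iff _).2
    exact Subgroup.subset_normalClosure (Set.mem_singleton _)
  simpa only [commutatorElement_def, _root_.map_mul, _root_.map_inv, a17, b17, c17,
    PresentedGroup.of] using h

lemma hom_lift {G H : Type*} [Group G] [Group H] (f : G →* H) (v : Fin 3 → G)
    (w : FreeGroup (Fin 3)) :
    f (FreeGroup.lift v w) = FreeGroup.lift (fun i => f (v i)) w := by
  have h : f.comp (FreeGroup.lift v) = FreeGroup.lift (fun i => f (v i)) := by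
    apply FreeGroup.ext_hom; intro i; simp
  exact DFunLike.congr_fun h w

/-- The subgroup `H = ⟨a⟩_∞ * ⟨b⟩_∞` of `Ĝ = ⟨a, b, c ∣ [a, b^c]⟩` is not verbally
closed: for any Lee `C`-test word `w₂` for `F₂` in three letters, the equation
`w₂(x₁, x₂, [x₁, x₂^{x₃}]) = w₂(a, b, 1)` has the solution `x₁ = a, x₂ = b, x₃ = c`
in `Ĝ` but no solution in `H`. -/
theorem Hhat17_not_verballyClosed (w₂ : FreeGroup (Fin 3))
    (hC : ∀ g g' : Fin 3 → FreeGroup (Fin 2),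
      FreeGroup.lift g w₂ = FreeGroup.lift g' w₂ → FreeGroup.lift g w₂ ≠ 1 →
        ∃ s : FreeGroup (Fin 2), ∀ i, g' i = s * g i * s⁻¹)
    (hLee : ∀ g : Fin 3 → FreeGroup (Fin 2),
      FreeGroup.lift g w₂ = 1 ↔
        ∃ z : FreeGroup (Fin 2), Subgroup.closure (Set.range g) ≤ Subgroup.zpowers z) :
    lhs17 w₂ a17 b17 c17 = FreeGroup.lift (![a17, b17, 1]) w₂ ∧
    ¬ ∃ x₁ x₂ x₃ : Ghat17, x₁ ∈ Hhat17 ∧ x₂ ∈ Hhat17 ∧ x₃ ∈ Hhat17 ∧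
        lhs17 w₂ x₁ x₂ x₃ = FreeGroup.lift (![a17, b17, 1]) w₂ := by
  constructor
  · unfold lhs17
    rw [relid]
  · rintro ⟨x₁, x₂, x₃, h₁, h₂, h₃, heq⟩
    rw [← range_phi] at h₁ h₂ h₃
    obtain ⟨g₁, hg₁⟩ := h₁
    obtain ⟨g₂, hg₂⟩ := h₂
    obtain ⟨g₃, hg₃⟩ := h₃
    have hL : phi17 (FreeGroup.lift
        ![g₁, g₂, g₁ * (g₃ * g₂ * g₃⁻¹) * g₁⁻¹ * (g₃ * g₂ * g₃⁻¹)⁻¹] w₂) =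
        lhs17 w₂ x₁ x₂ x₃ := by
      rw [hom_lift]
      unfold lhs17
      have hv : (fun i => phi17 (![g₁, g₂,
          g₁ * (g₃ * g₂ * g₃⁻¹) * g₁⁻¹ * (g₃ * g₂ * g₃⁻¹)⁻¹] i)) =
          ![x₁, x₂, x₁ * (x₃ * x₂ * x₃⁻¹) * x₁⁻¹ * (x₃ * x₂ * x₃⁻¹)⁻¹] := by
        funext i
        fin_cases i <;> simp [_root_.map_mul, _root_.map_inv, hg₁, hg₂, hg₃]
      rw [hv]
    have hR : phi17 (FreeGroup.lift ![FreeGroup.of 0, FreeGroup.of 1, 1] w₂) =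
        FreeGroup.lift ![a17, b17, 1] w₂ := by
      rw [hom_lift]
      have hv : (fun i => phi17 (![FreeGroup.of 0, FreeGroup.of 1, 1] i)) =
          ![a17, b17, 1] := by
        funext i
        fin_cases i <;> simp [phi17, _root_.map_one]
      rw [hv]
    have key : FreeGroup.lift
        ![g₁, g₂, g₁ * (g₃ * g₂ * g₃⁻¹) * g₁⁻¹ * (g₃ * g₂ * g₃⁻¹)⁻¹] w₂ =
        FreeGroup.lift ![FreeGroup.of 0, FreeGroup.of 1, (1 : FreeGroup (Fin 2))] w₂ :=
      phi_inj (by rw [hL, hR, heq])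
    have hRne : FreeGroup.lift
        ![FreeGroup.of 0, FreeGroup.of 1, (1 : FreeGroup (Fin 2))] w₂ ≠ 1 := by
      intro h
      obtain ⟨z, hz⟩ := (hLee _).1 h
      have h0 : (FreeGroup.of 0 : FreeGroup (Fin 2)) ∈ Subgroup.zpowers z :=
        hz (Subgroup.subset_closure ⟨0, rfl⟩)
      have h1 : (FreeGroup.of 1 : FreeGroup (Fin 2)) ∈ Subgroup.zpowers z :=
        hz (Subgroup.subset_closure ⟨1, rfl⟩)
      obtain ⟨k, hk⟩ := Subgroup.mem_zpowers_iff.mp h0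
      obtain ⟨l, hl⟩ := Subgroup.mem_zpowers_iff.mp h1
      have hcomm : (FreeGroup.of 0 : FreeGroup (Fin 2)) * FreeGroup.of 1 =
          FreeGroup.of 1 * FreeGroup.of 0 := by
        rw [← hk, ← hl, ← _root_.zpow_add, ← _root_.zpow_add, add_comm]
      have hm := congrArg (FreeGroup.lift ![Au, Bu]) hcomm
      simp only [_root_.map_mul, FreeGroup.lift_apply_of, Matrix.cons_val_zero, Matrix.cons_val_one,
        Matrix.head_cons] at hm
      have hval : Au.val * Bu.val = Bu.val * Au.val := by
        rw [← Units.val_mul, ← Units.val_mul, hm]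
      have he := congrFun (congrFun hval 0) 0
      rw [Au_val, Bu_val] at he
      norm_num [Matrix.mul_apply, Fin.sum_univ_two] at he
    obtain ⟨s, hs⟩ := hC _ _ key (by rw [key]; exact hRne)
    have hs0 := hs 0
    have hs1 := hs 1
    have hs2 := hs 2
    simp only [Matrix.cons_val_zero, Matrix.cons_val_one, Matrix.head_cons,
      Matrix.cons_val_two, Matrix.tail_cons] at hs0 hs1 hs2
    have hd : g₁ * (g₃ * g₂ * g₃⁻¹) * g₁⁻¹ * (g₃ * g₂ * g₃⁻¹)⁻¹ = 1 := by
      have h' := congrArg (fun x => s⁻¹ * x * s) hs2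
      simpa [mul_assoc] using h'.symm
    have hcomm : g₁ * (g₃ * g₂ * g₃⁻¹) = (g₃ * g₂ * g₃⁻¹) * g₁ := by
      calc g₁ * (g₃ * g₂ * g₃⁻¹)
          = (g₁ * (g₃ * g₂ * g₃⁻¹) * g₁⁻¹ * (g₃ * g₂ * g₃⁻¹)⁻¹) *
            ((g₃ * g₂ * g₃⁻¹) * g₁) := by group
        _ = (g₃ * g₂ * g₃⁻¹) * g₁ := by rw [hd]; rw [one_mul]
    have key2 : FreeGroup.of 0 * ((s * g₃ * s⁻¹) * FreeGroup.of 1 * (s * g₃ * s⁻¹)⁻¹) =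
        ((s * g₃ * s⁻¹) * FreeGroup.of 1 * (s * g₃ * s⁻¹)⁻¹) * FreeGroup.of (0 : Fin 2) := by
      rw [hs0, hs1]
      calc (s * g₁ * s⁻¹) * ((s * g₃ * s⁻¹) * (s * g₂ * s⁻¹) * (s * g₃ * s⁻¹)⁻¹)
          = s * (g₁ * (g₃ * g₂ * g₃⁻¹)) * s⁻¹ := by group
        _ = s * ((g₃ * g₂ * g₃⁻¹) * g₁) * s⁻¹ := by rw [hcomm]
        _ = ((s * g₃ * s⁻¹) * (s * g₂ * s⁻¹) * (s * g₃ * s⁻¹)⁻¹) * (s * g₁ * s⁻¹) := by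
            group
    have keyM := congrArg (FreeGroup.lift ![Au, Bu]) key2
    simp only [_root_.map_mul, _root_.map_inv, FreeGroup.lift_apply_of, Matrix.cons_val_zero,
      Matrix.cons_val_one, Matrix.head_cons] at keyM
    set W : Gm := FreeGroup.lift ![Au, Bu] s * FreeGroup.lift ![Au, Bu] g₃ *
        (FreeGroup.lift ![Au, Bu] s)⁻¹ with hWdef
    have hWP : Pg W := by
      have h' : FreeGroup.lift ![Au, Bu] (s * g₃ * s⁻¹) = W := by
        rw [hWdef]; simp [_root_.map_mul, _root_.map_inv]
      exact h' ▸ sanov_parity (s * g₃ * s⁻¹)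
    -- keyM : Au * (W * Bu * W⁻¹) = W * Bu * W⁻¹ * Au
    set M : Gm := W * Bu * W⁻¹ with hMdef
    have E1 : Au.val * M.val = M.val * Au.val := by
      have h := congrArg Units.val keyM
      simpa only [Units.val_mul] using h
    have E2 : M.val * W.val = W.val * Bu.val := by
      have h2 : M * W = W * Bu := by rw [hMdef]; group
      have h := congrArg Units.val h2
      simpa only [Units.val_mul] using h
    have e1 := congrFun (congrFun E1 0) 0
    rw [Au_val] at e1
    simp only [Matrix.mul_apply, Fin.sum_univ_two] at e1
    norm_num [Matrix.cons_val_zero, Matrix.cons_val_one, Matrix.head_cons] at e1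
    -- e1 : M.val 0 0 + 2 * M.val 1 0 = M.val 0 0  (roughly)
    have hm10 : M.val 1 0 = 0 := by linarith
    have e2a := congrFun (congrFun E2 1) 0
    have e2b := congrFun (congrFun E2 1) 1
    rw [Bu_val] at e2a e2b
    simp only [Matrix.mul_apply, Fin.sum_univ_two, hm10] at e2a e2b
    norm_num [Matrix.cons_val_zero, Matrix.cons_val_one, Matrix.head_cons] at e2a e2b
    have hW11 : W.val 1 1 ≠ 0 := Pg_entry_ne hWP
    -- e2b : M.val 1 1 * W.val 1 1 = W.val 1 1
    have hα : M.val 1 1 = 1 := by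
      rcases mul_eq_zero.mp (show (M.val 1 1 - 1) * W.val 1 1 = 0 by nlinarith) with h | h
      · linarith
      · exact absurd h hW11
    -- e2a : M.val 1 1 * W.val 1 0 = W.val 1 0 + 2 * W.val 1 1
    rw [hα] at e2a
    apply hW11
    linarith
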